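/- Every rule of the sequent calculus G preserves validity: for every instance of a rule of G (respecting its freshness side conditions), if every premiss of that instance is a valid sequent, then its conclusion is a valid sequent. -/

import Mathlib

namespace HXPathD

mutual
  inductive Path (P N M C : Type) : Type where
    | mod  : M → Path P N M C
    | nom  : N → Path P N M C
    | test : Node P N M C → Path P N M C
    | comp : Path P N M C → Path P N M C → Path P N M C

  inductive Node (P N M C : Type) : Type where
    | prop : P → Node P N M C
    | nom  : N → Node P N M C
    | bot  : Node P N M C
    | impl : Node P N M C → Node P N M C → Node P N M C
    | at   : N → Node P N M C → Node P N M C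
    | dia  : M → Node P N M C → Node P N M C
    | eq   : Path P N M C → C → Path P N M C → Node P N M C
    | neq  : Path P N M C → C → Path P N M C → Node P N M C
end

variable {P N M C : Type}

/-- Abbreviations. -/
def Node.neg (φ : Node P N M C) : Node P N M C := .impl φ .bot
def Node.top : Node P N M C := .impl .bot .bot
def Node.and (φ ψ : Node P N M C) : Node P N M C := .neg (.impl φ (.neg ψ))
def Node.iff (φ ψ : Node P N M C) : Node P N M C := .and (.impl φ ψ) (.impl ψ φ)
def Node.box (a : M) (φ : Node P N M C) : Node P N M C := .neg (.dia a (.neg φ))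
def Path.eps : Path P N M C := .test .top

/-- The node expression ⟨α⟩φ, obtained by the abbreviations
    ⟨j:⟩φ := @_jφ, ⟨ψ?⟩φ := ψ∧φ, ⟨αβ⟩φ := ⟨α⟩⟨β⟩φ (with ⟨a⟩φ primitive). -/
def Path.dia : Path P N M C → Node P N M C → Node P N M C
  | .mod a, φ => .dia a φ
  | .nom j, φ => .at j φ
  | .test ψ, φ => .and ψ φ
  | .comp α β, φ => α.dia (β.dia φ)

/-- A comparison ▲ ∈ {=_c, ≠_c : c ∈ Cmp}. -/
inductive Comparison (C : Type) : Type where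
  | ceq  : C → Comparison C
  | cneq : C → Comparison C

/-- The node expression ⟨α ▲ β⟩. -/
def Comparison.node : Comparison C → Path P N M C → Path P N M C → Node P N M C
  | .ceq c, α, β => .eq α c β
  | .cneq c, α, β => .neq α c β

/-- A hybrid data model. -/
structure Model (P N M C : Type) where
  W : Type
  nonempty : Nonempty W
  R : M → W → W → Prop
  E : C → W → W → Prop
  E_equiv : ∀ c, Equivalence (E c)
  g : N → W
  V : P → W → Prop

mutual
  def Model.satPath (𝔐 : Model P N M C) : Path P N M C → 𝔐.W → 𝔐.W → Prop
    | .mod a, n, n' => 𝔐.R a n n'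
    | .nom i, _, n' => 𝔐.g i = n'
    | .test φ, n, n' => n = n' ∧ 𝔐.sat φ n
    | .comp α β, n, n' => ∃ n'', 𝔐.satPath α n n'' ∧ 𝔐.satPath β n'' n'

  def Model.sat (𝔐 : Model P N M C) : Node P N M C → 𝔐.W → Prop
    | .prop p, n => 𝔐.V p n
    | .nom i, n => 𝔐.g i = n
    | .bot, _ => False
    | .impl φ ψ, n => 𝔐.sat φ n → 𝔐.sat ψ n
    | .at i φ, _ => 𝔐.sat φ (𝔐.g i)
    | .dia a φ, n => ∃ n', 𝔐.R a n n' ∧ 𝔐.sat φ n'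
    | .eq α c β, n => ∃ n' n'', 𝔐.satPath α n n' ∧ 𝔐.satPath β n n'' ∧ 𝔐.E c n' n''
    | .neq α c β, n => ∃ n' n'', 𝔐.satPath α n n' ∧ 𝔐.satPath β n n'' ∧ ¬ 𝔐.E c n' n''
end

mutual
  def Path.noms : Path P N M C → Set N
    | .mod _ => ∅
    | .nom i => {i}
    | .test φ => φ.noms
    | .comp α β => α.noms ∪ β.noms

  def Node.noms : Node P N M C → Set N
    | .prop _ => ∅
    | .nom i => {i}
    | .bot => ∅
    | .impl φ ψ => φ.noms ∪ ψ.noms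
    | .at i φ => insert i φ.noms
    | .dia _ φ => φ.noms
    | .eq α _ β => α.noms ∪ β.noms
    | .neq α _ β => α.noms ∪ β.noms
end

/-- Node expressions of the admissible forms for sequents:
    ⟨i: ▲ j:⟩ or @_iφ. -/
def Node.Admissible : Node P N M C → Prop
  | .at _ _ => True
  | .eq (.nom _) _ (.nom _) => True
  | .neq (.nom _) _ (.nom _) => True
  | _ => False

/-- A sequent: antecedent and consequent. -/
abbrev Sequent (P N M C : Type) := Set (Node P N M C) × Set (Node P N M C)

/-- The nominal `j` does not occur in the set `S`. -/
def FreshIn (j : N) (S : Set (Node P N M C)) : Prop := ∀ φ ∈ S, j ∉ φ.noms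

/-- Shape restriction on the axiom (Ax). -/
inductive AxForm : Node P N M C → Prop where
  | prop (i : N) (p : P) : AxForm (.at i (.prop p))
  | nom (i j : N) : AxForm (.at i (.nom j))
  | eq (i : N) (c : C) (j : N) : AxForm (.eq (.nom i) c (.nom j))

/-- Shape restriction on the rule (S1): φ is p, ⊥ or ⟨a⟩k. -/
inductive S1Form : Node P N M C → Prop where
  | prop (p : P) : S1Form (.prop p)
  | bot : S1Form .bot
  | dia (a : M) (k : N) : S1Form (.dia a (.nom k))

/-- One rule instance of the sequent calculus G: `Step cut prems concl` holds iff
    `concl` may be inferred from the premisses `prems` by a rule of G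
    (when `cut = false`, the rule (Cut) is excluded). -/
inductive Step (cut : Bool) : List (Sequent P N M C) → Sequent P N M C → Prop where
  | ax {Γ Δ : Set (Node P N M C)} {φ} (h : AxForm φ) :
      Step cut [] (insert φ Γ, insert φ Δ)
  | bot {Γ Δ : Set (Node P N M C)} (i : N) :
      Step cut [] (insert (.at i .bot) Γ, Δ)
  | implL {Γ Δ : Set (Node P N M C)} (i : N) (φ ψ : Node P N M C) :
      Step cut [(Γ, insert (.at i φ) Δ), (insert (.at i ψ) Γ, Δ)]
        (insert (.at i (.impl φ ψ)) Γ, Δ)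
  | implR {Γ Δ : Set (Node P N M C)} (i : N) (φ ψ : Node P N M C) :
      Step cut [(insert (.at i φ) Γ, insert (.at i ψ) Δ)]
        (Γ, insert (.at i (.impl φ ψ)) Δ)
  | atT {Γ Δ : Set (Node P N M C)} (i : N) :
      Step cut [(insert (.at i (.nom i)) Γ, Δ)] (Γ, Δ)
  | at5 {Γ Δ : Set (Node P N M C)} (i j k : N) :
      Step cut
        [(insert (.at j (.nom k)) (insert (.at i (.nom j)) (insert (.at i (.nom k)) Γ)), Δ)]
        (insert (.at i (.nom j)) (insert (.at i (.nom k)) Γ), Δ)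
  | nomRule {Γ Δ : Set (Node P N M C)} (i j : N)
      (hj : FreshIn j Γ) (hj' : FreshIn j Δ) :
      Step cut [(insert (.at i (.nom j)) Γ, Δ)] (Γ, Δ)
  | s1 {Γ Δ : Set (Node P N M C)} (i j : N) {φ : Node P N M C} (h : S1Form φ) :
      Step cut
        [(insert (.at j φ) (insert (.at i (.nom j)) (insert (.at i φ) Γ)), Δ)]
        (insert (.at i (.nom j)) (insert (.at i φ) Γ), Δ)
  | s2 {Γ Δ : Set (Node P N M C)} (i j k : N) (a : M) :
      Step cut
        [(insert (.at i (.dia a (.nom k)))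
            (insert (.at j (.nom k)) (insert (.at i (.dia a (.nom j))) Γ)), Δ)]
        (insert (.at j (.nom k)) (insert (.at i (.dia a (.nom j))) Γ), Δ)
  | s3 {Γ Δ : Set (Node P N M C)} (i j k : N) (c : C) :
      Step cut
        [(insert (.eq (.nom j) c (.nom k))
            (insert (.at i (.nom j)) (insert (.eq (.nom i) c (.nom k)) Γ)), Δ)]
        (insert (.at i (.nom j)) (insert (.eq (.nom i) c (.nom k)) Γ), Δ)
  | atL {Γ Δ : Set (Node P N M C)} (i j : N) (φ : Node P N M C) :
      Step cut [(insert (.at i φ) Γ, Δ)] (insert (.at j (.at i φ)) Γ, Δ)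
  | atR {Γ Δ : Set (Node P N M C)} (i j : N) (φ : Node P N M C) :
      Step cut [(Γ, insert (.at i φ) Δ)] (Γ, insert (.at j (.at i φ)) Δ)
  | diaL {Γ Δ : Set (Node P N M C)} (i j : N) (a : M) (φ : Node P N M C)
      (hj : FreshIn j (insert (.at i (.dia a φ)) Γ)) (hj' : FreshIn j Δ) :
      Step cut
        [(insert (.at i (.dia a (.nom j))) (insert (.at j φ) Γ), Δ)]
        (insert (.at i (.dia a φ)) Γ, Δ)
  | diaR {Γ Δ : Set (Node P N M C)} (i j : N) (a : M) (φ : Node P N M C) :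
      Step cut
        [(insert (.at i (.dia a (.nom j))) Γ,
          insert (.at i (.dia a φ)) (insert (.at j φ) Δ))]
        (insert (.at i (.dia a (.nom j))) Γ, insert (.at i (.dia a φ)) Δ)
  | cmpL {Γ Δ : Set (Node P N M C)} (i j k : N) (α β : Path P N M C)
      (b : Comparison C) (hjk : j ≠ k)
      (hj : FreshIn j (insert (.at i (b.node α β)) Γ)) (hj' : FreshIn j Δ)
      (hk : FreshIn k (insert (.at i (b.node α β)) Γ)) (hk' : FreshIn k Δ) :
      Step cut
        [(insert (.at i (α.dia (.nom j)))
            (insert (.at i (β.dia (.nom k)))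
              (insert (b.node (.nom j) (.nom k)) Γ)), Δ)]
        (insert (.at i (b.node α β)) Γ, Δ)
  | cmpR {Γ Δ : Set (Node P N M C)} (i j k : N) (α β : Path P N M C)
      (b : Comparison C) :
      Step cut
        [(insert (.at i (α.dia (.nom j))) (insert (.at i (β.dia (.nom k))) Γ),
          insert (.at i (b.node α β)) (insert (b.node (.nom j) (.nom k)) Δ))]
        (insert (.at i (α.dia (.nom j))) (insert (.at i (β.dia (.nom k))) Γ),
          insert (.at i (b.node α β)) Δ)
  | eqT {Γ Δ : Set (Node P N M C)} (i : N) (c : C) :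
      Step cut [(insert (.eq (.nom i) c (.nom i)) Γ, Δ)] (Γ, Δ)
  | eq5 {Γ Δ : Set (Node P N M C)} (i j k : N) (c : C) :
      Step cut
        [(insert (.eq (.nom j) c (.nom k))
            (insert (.eq (.nom i) c (.nom j)) (insert (.eq (.nom i) c (.nom k)) Γ)), Δ)]
        (insert (.eq (.nom i) c (.nom j)) (insert (.eq (.nom i) c (.nom k)) Γ), Δ)
  | neqL {Γ Δ : Set (Node P N M C)} (i j : N) (c : C) :
      Step cut [(Γ, insert (.eq (.nom i) c (.nom j)) Δ)]
        (insert (.neq (.nom i) c (.nom j)) Γ, Δ)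
  | neqR {Γ Δ : Set (Node P N M C)} (i j : N) (c : C) :
      Step cut [(insert (.eq (.nom i) c (.nom j)) Γ, Δ)]
        (Γ, insert (.neq (.nom i) c (.nom j)) Δ)
  | cutRule {Γ Δ Γ' Δ' : Set (Node P N M C)} (φ : Node P N M C)
      (ha : φ.Admissible) (hc : cut = true) :
      Step cut [(Γ, insert φ Δ), (insert φ Γ', Δ')] (Γ ∪ Γ', Δ ∪ Δ')
  | wl {Γ Δ : Set (Node P N M C)} (φ : Node P N M C) (ha : φ.Admissible) :
      Step cut [(Γ, Δ)] (insert φ Γ, Δ)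
  | wr {Γ Δ : Set (Node P N M C)} (φ : Node P N M C) (ha : φ.Admissible) :
      Step cut [(Γ, Δ)] (Γ, insert φ Δ)

/-- Derivability in G (`Deriv true`) resp. in G without (Cut) (`Deriv false`):
    a derivation built from the rules whose leaves are instances of the
    zero-premiss rules (Ax) or (⊥). -/
inductive Deriv (cut : Bool) : Sequent P N M C → Prop where
  | step {prems : List (Sequent P N M C)} {concl : Sequent P N M C}
      (h : Step cut prems concl) (ih : ∀ s ∈ prems, Deriv cut s) : Deriv cut concl

/-- Γ ⊢_G Δ : the sequent is provable in G. -/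
def ProvableG (Γ Δ : Set (Node P N M C)) : Prop := Deriv true (Γ, Δ)

/-- M ⊩ φ : global satisfaction. -/
def Model.satG (𝔐 : Model P N M C) (φ : Node P N M C) : Prop := ∀ n, 𝔐.sat φ n

/-- Validity of a sequent. -/
def ValidSeq (S : Sequent P N M C) : Prop :=
  ∀ 𝔐 : Model P N M C, (∀ γ ∈ S.1, 𝔐.satG γ) → ∃ δ ∈ S.2, 𝔐.satG δ

/-- Formulas of the basic hybrid logic H(@): no data comparisons. -/
def Node.IsHybrid : Node P N M C → Prop
  | .prop _ => True
  | .nom _ => True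
  | .bot => True
  | .impl φ ψ => φ.IsHybrid ∧ ψ.IsHybrid
  | .at _ φ => φ.IsHybrid
  | .dia _ φ => φ.IsHybrid
  | .eq _ _ _ => False
  | .neq _ _ _ => False

section Aux
open Classical in
/-- Update the assignment at one nominal. -/
noncomputable def Model.update (𝔐 : Model P N M C) (j : N) (w : 𝔐.W) : Model P N M C :=
  { 𝔐 with g := fun i => if i = j then w else 𝔐.g i }

@[simp] lemma Model.update_W (𝔐 : Model P N M C) (j : N) (w : 𝔐.W) :
    (𝔐.update j w).W = 𝔐.W := rfl

lemma Model.update_g_ne (𝔐 : Model P N M C) {j i : N} (w : 𝔐.W) (h : i ≠ j) :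
    (𝔐.update j w).g i = 𝔐.g i := by simp [Model.update, h]

lemma Model.update_g_self (𝔐 : Model P N M C) (j : N) (w : 𝔐.W) :
    (𝔐.update j w).g j = w := by simp [Model.update]

mutual
theorem satPath_update (𝔐 : Model P N M C) (j : N) (w : 𝔐.W) :
    ∀ (α : Path P N M C), j ∉ α.noms → ∀ n n' : 𝔐.W,
      ((𝔐.update j w).satPath α n n' ↔ 𝔐.satPath α n n')
  | .mod a, _, n, n' => by simp [Model.satPath, Model.update]
  | .nom i, h, n, n' => by
      simp [Path.noms] at h
      simp [Model.satPath, Model.update_g_ne 𝔐 w (Ne.symm h)]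
  | .test φ, h, n, n' => by
      simp only [Path.noms] at h
      simp [Model.satPath, sat_update 𝔐 j w φ h]
  | .comp α β, h, n, n' => by
      simp only [Path.noms, Set.mem_union, not_or] at h
      simp only [Model.satPath]
      constructor
      · rintro ⟨m, h1, h2⟩
        exact ⟨m, (satPath_update 𝔐 j w α h.1 n m).mp h1,
          (satPath_update 𝔐 j w β h.2 m n').mp h2⟩
      · rintro ⟨m, h1, h2⟩
        exact ⟨m, (satPath_update 𝔐 j w α h.1 n m).mpr h1,
          (satPath_update 𝔐 j w β h.2 m n').mpr h2⟩

theorem sat_update (𝔐 : Model P N M C) (j : N) (w : 𝔐.W) :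
    ∀ (φ : Node P N M C), j ∉ φ.noms → ∀ n : 𝔐.W,
      ((𝔐.update j w).sat φ n ↔ 𝔐.sat φ n)
  | .prop p, _, n => by simp [Model.sat, Model.update]
  | .nom i, h, n => by
      simp [Node.noms] at h
      simp [Model.sat, Model.update_g_ne 𝔐 w (Ne.symm h)]
  | .bot, _, n => by simp [Model.sat]
  | .impl φ ψ, h, n => by
      simp only [Node.noms, Set.mem_union, not_or] at h
      simp only [Model.sat, sat_update 𝔐 j w φ h.1 n, sat_update 𝔐 j w ψ h.2 n]
  | .at i φ, h, n => by
      simp only [Node.noms, Set.mem_insert_iff, not_or] at h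
      simp only [Model.sat, Model.update_g_ne 𝔐 w (Ne.symm h.1),
        sat_update 𝔐 j w φ h.2]
  | .dia a φ, h, n => by
      simp only [Node.noms] at h
      simp only [Model.sat, Model.update]
      exact exists_congr fun m => and_congr_right fun _ => sat_update 𝔐 j w φ h m
  | .eq α c β, h, n => by
      simp only [Node.noms, Set.mem_union, not_or] at h
      simp only [Model.sat]
      refine exists_congr fun m => exists_congr fun m' => ?_
      exact and_congr (satPath_update 𝔐 j w α h.1 n m)
        (and_congr (satPath_update 𝔐 j w β h.2 n m') Iff.rfl)
  | .neq α c β, h, n => by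
      simp only [Node.noms, Set.mem_union, not_or] at h
      simp only [Model.sat]
      refine exists_congr fun m => exists_congr fun m' => ?_
      exact and_congr (satPath_update 𝔐 j w α h.1 n m)
        (and_congr (satPath_update 𝔐 j w β h.2 n m') Iff.rfl)
end

lemma satG_update {𝔐 : Model P N M C} {j : N} {w : 𝔐.W} {φ : Node P N M C}
    (h : j ∉ φ.noms) : (𝔐.update j w).satG φ ↔ 𝔐.satG φ :=
  forall_congr' fun n => sat_update 𝔐 j w φ h n

theorem sat_pathDia (𝔐 : Model P N M C) :
    ∀ (α : Path P N M C) (φ : Node P N M C) (n : 𝔐.W),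
      𝔐.sat (α.dia φ) n ↔ ∃ n', 𝔐.satPath α n n' ∧ 𝔐.sat φ n'
  | .mod a, φ, n => by simp [Path.dia, Model.sat, Model.satPath]
  | .nom i, φ, n => by simp [Path.dia, Model.sat, Model.satPath]
  | .test ψ, φ, n => by
      simp only [Path.dia, Model.sat, Model.satPath, Node.and, Node.neg]
      constructor
      · intro h
        by_cases h1 : 𝔐.sat ψ n
        · by_cases h2 : 𝔐.sat φ n
          · exact ⟨n, ⟨rfl, h1⟩, h2⟩
          · exact absurd (fun _ => h2) h
        · exact absurd (fun hh _ => h1 hh) h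
      · rintro ⟨m, ⟨rfl, h1⟩, h2⟩ hh
        exact (hh h1) h2
  | .comp α β, φ, n => by
      simp only [Path.dia, Model.satPath, sat_pathDia 𝔐 α, sat_pathDia 𝔐 β]
      constructor
      · rintro ⟨m, h1, m', h2, h3⟩; exact ⟨m', ⟨m, h1, h2⟩, h3⟩
      · rintro ⟨m', ⟨m, h1, h2⟩, h3⟩; exact ⟨m, h1, m', h2, h3⟩

lemma satG_at {𝔐 : Model P N M C} {i : N} {φ : Node P N M C} :
    𝔐.satG (.at i φ) ↔ 𝔐.sat φ (𝔐.g i) := by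
  have := 𝔐.nonempty
  simp [Model.satG, Model.sat]

lemma sat_eq_nom {𝔐 : Model P N M C} {i j : N} {c : C} {n : 𝔐.W} :
    𝔐.sat (.eq (.nom i) c (.nom j)) n ↔ 𝔐.E c (𝔐.g i) (𝔐.g j) := by
  simp [Model.sat, Model.satPath]

lemma sat_neq_nom {𝔐 : Model P N M C} {i j : N} {c : C} {n : 𝔐.W} :
    𝔐.sat (.neq (.nom i) c (.nom j)) n ↔ ¬ 𝔐.E c (𝔐.g i) (𝔐.g j) := by
  simp [Model.sat, Model.satPath]

lemma satG_eq_nom {𝔐 : Model P N M C} {i j : N} {c : C} :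
    𝔐.satG (.eq (.nom i) c (.nom j)) ↔ 𝔐.E c (𝔐.g i) (𝔐.g j) := by
  have := 𝔐.nonempty
  simp [Model.satG, sat_eq_nom]

lemma satG_neq_nom {𝔐 : Model P N M C} {i j : N} {c : C} :
    𝔐.satG (.neq (.nom i) c (.nom j)) ↔ ¬ 𝔐.E c (𝔐.g i) (𝔐.g j) := by
  have := 𝔐.nonempty
  simp [Model.satG, sat_neq_nom]

end Aux
section Aux2

lemma sat_impl {𝔐 : Model P N M C} {φ ψ : Node P N M C} {n : 𝔐.W} :
    𝔐.sat (.impl φ ψ) n ↔ (𝔐.sat φ n → 𝔐.sat ψ n) := by simp [Model.sat]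

lemma sat_at {𝔐 : Model P N M C} {i : N} {φ : Node P N M C} {n : 𝔐.W} :
    𝔐.sat (.at i φ) n ↔ 𝔐.sat φ (𝔐.g i) := by simp [Model.sat]

lemma sat_nom {𝔐 : Model P N M C} {i : N} {n : 𝔐.W} :
    𝔐.sat (.nom i) n ↔ 𝔐.g i = n := by simp [Model.sat]

lemma sat_dia' {𝔐 : Model P N M C} {a : M} {φ : Node P N M C} {n : 𝔐.W} :
    𝔐.sat (.dia a φ) n ↔ ∃ n', 𝔐.R a n n' ∧ 𝔐.sat φ n' := by simp [Model.sat]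

lemma satG_at_nom {𝔐 : Model P N M C} {i j : N} :
    𝔐.satG (.at i (.nom j)) ↔ 𝔐.g j = 𝔐.g i := by
  rw [satG_at, sat_nom]

lemma satG_at_dia_nom {𝔐 : Model P N M C} {i j : N} {a : M} :
    𝔐.satG (.at i (.dia a (.nom j))) ↔ 𝔐.R a (𝔐.g i) (𝔐.g j) := by
  rw [satG_at, sat_dia']
  simp [sat_nom]

lemma sat_pathDia_nom {𝔐 : Model P N M C} {α : Path P N M C} {j : N} {n : 𝔐.W} :
    𝔐.sat (α.dia (.nom j)) n ↔ 𝔐.satPath α n (𝔐.g j) := by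
  rw [sat_pathDia]
  constructor
  · rintro ⟨m, hm, hj⟩; rw [sat_nom] at hj; subst hj; exact hm
  · intro hm; exact ⟨_, hm, sat_nom.mpr rfl⟩

/-- The relation compared by ▲. -/
def Comparison.sem (b : Comparison C) (𝔐 : Model P N M C) (x y : 𝔐.W) : Prop :=
  match b with
  | .ceq c => 𝔐.E c x y
  | .cneq c => ¬ 𝔐.E c x y

lemma sat_cmp {𝔐 : Model P N M C} {b : Comparison C} {α β : Path P N M C} {n : 𝔐.W} :
    𝔐.sat (b.node α β) n ↔ ∃ x y, 𝔐.satPath α n x ∧ 𝔐.satPath β n y ∧ b.sem 𝔐 x y := by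
  cases b <;> simp [Comparison.node, Comparison.sem, Model.sat]

lemma satG_cmp_nom {𝔐 : Model P N M C} {b : Comparison C} {j k : N} :
    𝔐.satG (b.node (.nom j) (.nom k)) ↔ b.sem 𝔐 (𝔐.g j) (𝔐.g k) := by
  have := 𝔐.nonempty
  cases b <;> simp [Comparison.node, Comparison.sem, Model.satG, sat_eq_nom, sat_neq_nom]

lemma cmp_noms {b : Comparison C} {α β : Path P N M C} :
    (Comparison.node b α β : Node P N M C).noms = α.noms ∪ β.noms := by
  cases b <;> simp [Comparison.node, Node.noms]

lemma sem_update {𝔐 : Model P N M C} {b : Comparison C} {j : N} {w : 𝔐.W} {x y : 𝔐.W} :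
    b.sem (𝔐.update j w) x y ↔ b.sem 𝔐 x y := by
  cases b <;> exact Iff.rfl

lemma satG_update2 {𝔐 : Model P N M C} {j k : N} {x : 𝔐.W} {y : (𝔐.update j x).W}
    {φ : Node P N M C} (hj : j ∉ φ.noms) (hk : k ∉ φ.noms) :
    ((𝔐.update j x).update k y).satG φ ↔ 𝔐.satG φ :=
  (satG_update hk).trans (satG_update hj)

end Aux2
/-- every rule of G preserves validity. -/
theorem step_preserves_validity {P N M C : Type} [Countable P] [Infinite P] [Countable N] [Infinite N] [Finite M] [Finite C]
    {prems : List (Sequent P N M C)} {concl : Sequent P N M C}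
    (h : Step true prems concl) (hp : ∀ s ∈ prems, ValidSeq s) :
    ValidSeq concl := by
  classical
  cases h with
  | @ax Γ Δ φ hax =>
      intro 𝔐 hΓ
      exact ⟨φ, Set.mem_insert _ _, hΓ φ (Set.mem_insert _ _)⟩
  | @bot Γ Δ i =>
      intro 𝔐 hΓ
      obtain ⟨n0⟩ := 𝔐.nonempty
      have h1 := hΓ _ (Set.mem_insert _ _) n0
      rw [sat_at] at h1
      exact absurd h1 (by simp [Model.sat])
  | @implL Γ Δ i φ ψ =>
      intro 𝔐 hΓ
      have h1 : ValidSeq (Γ, insert (Node.at i φ) Δ) := hp _ (by simp)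
      have h2 : ValidSeq (insert (Node.at i ψ) Γ, Δ) := hp _ (by simp)
      have hrest : ∀ γ ∈ Γ, 𝔐.satG γ := fun γ hγ => hΓ γ (Set.mem_insert_of_mem _ hγ)
      have himp : 𝔐.sat φ (𝔐.g i) → 𝔐.sat ψ (𝔐.g i) :=
        sat_impl.mp (satG_at.mp (hΓ _ (Set.mem_insert _ _)))
      by_cases hφ : 𝔐.sat φ (𝔐.g i)
      · exact h2 𝔐 (by
          intro γ hγ
          rcases Set.mem_insert_iff.mp hγ with rfl | hγ
          · exact satG_at.mpr (himp hφ)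
          · exact hrest γ hγ)
      · obtain ⟨δ, hδ, hs⟩ := h1 𝔐 hrest
        rcases Set.mem_insert_iff.mp hδ with rfl | hδ
        · exact absurd (satG_at.mp hs) hφ
        · exact ⟨δ, hδ, hs⟩
  | @implR Γ Δ i φ ψ =>
      intro 𝔐 hΓ
      have h1 : ValidSeq (insert (Node.at i φ) Γ, insert (Node.at i ψ) Δ) := hp _ (by simp)
      by_cases hφ : 𝔐.sat φ (𝔐.g i)
      · obtain ⟨δ, hδ, hs⟩ := h1 𝔐 (by
          intro γ hγ
          rcases Set.mem_insert_iff.mp hγ with rfl | hγ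
          · exact satG_at.mpr hφ
          · exact hΓ γ hγ)
        rcases Set.mem_insert_iff.mp hδ with rfl | hδ
        · exact ⟨_, Set.mem_insert _ _,
            satG_at.mpr (sat_impl.mpr fun _ => satG_at.mp hs)⟩
        · exact ⟨δ, Set.mem_insert_of_mem _ hδ, hs⟩
      · exact ⟨_, Set.mem_insert _ _,
          satG_at.mpr (sat_impl.mpr fun h => absurd h hφ)⟩
  | @atT Γ Δ i =>
      intro 𝔐 hΓ
      have h1 : ValidSeq (insert (Node.at i (Node.nom i)) Γ, Δ) := hp _ (by simp)
      exact h1 𝔐 (by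
        intro γ hγ
        rcases Set.mem_insert_iff.mp hγ with rfl | hγ
        · exact satG_at_nom.mpr rfl
        · exact hΓ γ hγ)
  | @at5 Γ Δ i j k =>
      intro 𝔐 hΓ
      have h1 : ValidSeq (insert (Node.at j (Node.nom k))
          (insert (Node.at i (Node.nom j)) (insert (Node.at i (Node.nom k)) Γ)), Δ) :=
        hp _ (by simp)
      have hij := satG_at_nom.mp (hΓ _ (Set.mem_insert _ _))
      have hik := satG_at_nom.mp (hΓ _ (Set.mem_insert_of_mem _ (Set.mem_insert _ _)))
      exact h1 𝔐 (by
        intro γ hγ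
        rcases Set.mem_insert_iff.mp hγ with rfl | hγ
        · exact satG_at_nom.mpr (hik.trans hij.symm)
        · exact hΓ γ hγ)
  | @nomRule Γ Δ i j hj hj' =>
      intro 𝔐 hΓ
      have h1 : ValidSeq (insert (Node.at i (Node.nom j)) Γ, Δ) := hp _ (by simp)
      obtain ⟨δ, hδ, hs⟩ := h1 (𝔐.update j (𝔐.g i)) (by
        intro γ hγ
        rcases Set.mem_insert_iff.mp hγ with rfl | hγ
        · refine satG_at_nom.mpr ?_
          by_cases hij : i = j
          · subst hij; rfl
          · rw [Model.update_g_self, Model.update_g_ne 𝔐 _ hij]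
        · exact (satG_update (hj γ hγ)).mpr (hΓ γ hγ))
      exact ⟨δ, hδ, (satG_update (hj' δ hδ)).mp hs⟩
  | @s1 Γ Δ i j φ hform =>
      intro 𝔐 hΓ
      have h1 : ValidSeq (insert (Node.at j φ)
          (insert (Node.at i (Node.nom j)) (insert (Node.at i φ) Γ)), Δ) := hp _ (by simp)
      have hij := satG_at_nom.mp (hΓ _ (Set.mem_insert _ _))
      have hiφ := satG_at.mp (hΓ _ (Set.mem_insert_of_mem _ (Set.mem_insert _ _)))
      exact h1 𝔐 (by
        intro γ hγ
        rcases Set.mem_insert_iff.mp hγ with rfl | hγ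
        · exact satG_at.mpr (by rw [hij]; exact hiφ)
        · exact hΓ γ hγ)
  | @s2 Γ Δ i j k a =>
      intro 𝔐 hΓ
      have h1 : ValidSeq (insert (Node.at i (Node.dia a (Node.nom k)))
          (insert (Node.at j (Node.nom k))
            (insert (Node.at i (Node.dia a (Node.nom j))) Γ)), Δ) := hp _ (by simp)
      have hjk := satG_at_nom.mp (hΓ _ (Set.mem_insert _ _))
      have hij := satG_at_dia_nom.mp (hΓ _ (Set.mem_insert_of_mem _ (Set.mem_insert _ _)))
      exact h1 𝔐 (by
        intro γ hγ
        rcases Set.mem_insert_iff.mp hγ with rfl | hγ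
        · exact satG_at_dia_nom.mpr (by rw [hjk]; exact hij)
        · exact hΓ γ hγ)
  | @s3 Γ Δ i j k c =>
      intro 𝔐 hΓ
      have h1 : ValidSeq (insert (Node.eq (Path.nom j) c (Path.nom k))
          (insert (Node.at i (Node.nom j))
            (insert (Node.eq (Path.nom i) c (Path.nom k)) Γ)), Δ) := hp _ (by simp)
      have hij := satG_at_nom.mp (hΓ _ (Set.mem_insert _ _))
      have hik := satG_eq_nom.mp (hΓ _ (Set.mem_insert_of_mem _ (Set.mem_insert _ _)))
      exact h1 𝔐 (by
        intro γ hγ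
        rcases Set.mem_insert_iff.mp hγ with rfl | hγ
        · exact satG_eq_nom.mpr (by rw [hij]; exact hik)
        · exact hΓ γ hγ)
  | @atL Γ Δ i j φ =>
      intro 𝔐 hΓ
      have h1 : ValidSeq (insert (Node.at i φ) Γ, Δ) := hp _ (by simp)
      have hh := satG_at.mp (hΓ _ (Set.mem_insert _ _))
      rw [sat_at] at hh
      exact h1 𝔐 (by
        intro γ hγ
        rcases Set.mem_insert_iff.mp hγ with rfl | hγ
        · exact satG_at.mpr hh
        · exact hΓ γ (Set.mem_insert_of_mem _ hγ))
  | @atR Γ Δ i j φ =>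
      intro 𝔐 hΓ
      have h1 : ValidSeq (Γ, insert (Node.at i φ) Δ) := hp _ (by simp)
      obtain ⟨δ, hδ, hs⟩ := h1 𝔐 hΓ
      rcases Set.mem_insert_iff.mp hδ with rfl | hδ
      · exact ⟨_, Set.mem_insert _ _, satG_at.mpr (sat_at.mpr (satG_at.mp hs))⟩
      · exact ⟨δ, Set.mem_insert_of_mem _ hδ, hs⟩
  | @diaL Γ Δ i j a φ hj hj' =>
      intro 𝔐 hΓ
      have h1 : ValidSeq (insert (Node.at i (Node.dia a (Node.nom j)))
          (insert (Node.at j φ) Γ), Δ) := hp _ (by simp)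
      have hd := satG_at.mp (hΓ _ (Set.mem_insert _ _))
      rw [sat_dia'] at hd
      obtain ⟨w, hw, hφw⟩ := hd
      have hji : ¬ j = i ∧ j ∉ φ.noms := by
        have := hj _ (Set.mem_insert _ _)
        simpa [Node.noms, not_or] using this
      obtain ⟨δ, hδ, hs⟩ := h1 (𝔐.update j w) (by
        intro γ hγ
        rcases Set.mem_insert_iff.mp hγ with rfl | hγ
        · refine satG_at_dia_nom.mpr ?_
          rw [Model.update_g_self, Model.update_g_ne 𝔐 _ (Ne.symm hji.1)]
          exact hw
        rcases Set.mem_insert_iff.mp hγ with rfl | hγ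
        · refine satG_at.mpr ?_
          rw [Model.update_g_self]
          exact (sat_update 𝔐 j w φ hji.2 w).mpr hφw
        · exact (satG_update (hj γ (Set.mem_insert_of_mem _ hγ))).mpr
            (hΓ γ (Set.mem_insert_of_mem _ hγ)))
      exact ⟨δ, hδ, (satG_update (hj' δ hδ)).mp hs⟩
  | @diaR Γ Δ i j a φ =>
      intro 𝔐 hΓ
      have h1 : ValidSeq (insert (Node.at i (Node.dia a (Node.nom j))) Γ,
          insert (Node.at i (Node.dia a φ)) (insert (Node.at j φ) Δ)) := hp _ (by simp)
      obtain ⟨δ, hδ, hs⟩ := h1 𝔐 hΓ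
      rcases Set.mem_insert_iff.mp hδ with rfl | hδ
      · exact ⟨_, Set.mem_insert _ _, hs⟩
      rcases Set.mem_insert_iff.mp hδ with rfl | hδ
      · have hR := satG_at_dia_nom.mp (hΓ _ (Set.mem_insert _ _))
        exact ⟨_, Set.mem_insert _ _,
          satG_at.mpr (sat_dia'.mpr ⟨𝔐.g j, hR, satG_at.mp hs⟩)⟩
      · exact ⟨δ, Set.mem_insert_of_mem _ hδ, hs⟩
  | @cmpL Γ Δ i j k α β b hjk hj hj' hk hk' =>
      intro 𝔐 hΓ
      have h1 : ValidSeq (insert (Node.at i (α.dia (Node.nom j)))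
          (insert (Node.at i (β.dia (Node.nom k)))
            (insert (b.node (Path.nom j) (Path.nom k)) Γ)), Δ) := hp _ (by simp)
      have hc := satG_at.mp (hΓ _ (Set.mem_insert _ _))
      rw [sat_cmp] at hc
      obtain ⟨x, y, hx, hy, hsem⟩ := hc
      have hjf : ¬ j = i ∧ j ∉ α.noms ∧ j ∉ β.noms := by
        have := hj _ (Set.mem_insert _ _)
        simpa [Node.noms, cmp_noms, not_or] using this
      have hkf : ¬ k = i ∧ k ∉ α.noms ∧ k ∉ β.noms := by
        have := hk _ (Set.mem_insert _ _)
        simpa [Node.noms, cmp_noms, not_or] using this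
      obtain ⟨δ, hδ, hs⟩ := h1 ((𝔐.update j x).update k y) (by
        have hgj : ((𝔐.update j x).update k y).g j = x := by
          exact (Model.update_g_ne (𝔐.update j x) y hjk).trans (Model.update_g_self 𝔐 j x)
        have hgk : ((𝔐.update j x).update k y).g k = y := Model.update_g_self _ _ _
        have hgi : ((𝔐.update j x).update k y).g i = 𝔐.g i := by
          exact (Model.update_g_ne (𝔐.update j x) y (Ne.symm hkf.1)).trans
            (Model.update_g_ne 𝔐 x (Ne.symm hjf.1))
        intro γ hγ
        rcases Set.mem_insert_iff.mp hγ with rfl | hγ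
        · refine satG_at.mpr (sat_pathDia_nom.mpr ?_)
          rw [hgj, hgi]
          exact (satPath_update (𝔐.update j x) k y α hkf.2.1 _ _).mpr
            ((satPath_update 𝔐 j x α hjf.2.1 _ _).mpr hx)
        rcases Set.mem_insert_iff.mp hγ with rfl | hγ
        · refine satG_at.mpr (sat_pathDia_nom.mpr ?_)
          rw [hgk, hgi]
          exact (satPath_update (𝔐.update j x) k y β hkf.2.2 _ _).mpr
            ((satPath_update 𝔐 j x β hjf.2.2 _ _).mpr hy)
        rcases Set.mem_insert_iff.mp hγ with rfl | hγ
        · refine satG_cmp_nom.mpr ?_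
          rw [hgj, hgk]
          exact sem_update.mpr (sem_update.mpr hsem)
        · exact (satG_update2 (hj γ (Set.mem_insert_of_mem _ hγ))
            (hk γ (Set.mem_insert_of_mem _ hγ))).mpr (hΓ γ (Set.mem_insert_of_mem _ hγ)))
      exact ⟨δ, hδ, (satG_update2 (hj' δ hδ) (hk' δ hδ)).mp hs⟩
  | @cmpR Γ Δ i j k α β b =>
      intro 𝔐 hΓ
      have h1 : ValidSeq (insert (Node.at i (α.dia (Node.nom j)))
          (insert (Node.at i (β.dia (Node.nom k))) Γ),
          insert (Node.at i (b.node α β))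
            (insert (b.node (Path.nom j) (Path.nom k)) Δ)) := hp _ (by simp)
      obtain ⟨δ, hδ, hs⟩ := h1 𝔐 hΓ
      rcases Set.mem_insert_iff.mp hδ with rfl | hδ
      · exact ⟨_, Set.mem_insert _ _, hs⟩
      rcases Set.mem_insert_iff.mp hδ with rfl | hδ
      · have hsem := satG_cmp_nom.mp hs
        have hα := sat_pathDia_nom.mp (satG_at.mp (hΓ _ (Set.mem_insert _ _)))
        have hβ := sat_pathDia_nom.mp
          (satG_at.mp (hΓ _ (Set.mem_insert_of_mem _ (Set.mem_insert _ _))))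
        exact ⟨_, Set.mem_insert _ _,
          satG_at.mpr (sat_cmp.mpr ⟨_, _, hα, hβ, hsem⟩)⟩
      · exact ⟨δ, Set.mem_insert_of_mem _ hδ, hs⟩
  | @eqT Γ Δ i c =>
      intro 𝔐 hΓ
      have h1 : ValidSeq (insert (Node.eq (Path.nom i) c (Path.nom i)) Γ, Δ) :=
        hp _ (by simp)
      exact h1 𝔐 (by
        intro γ hγ
        rcases Set.mem_insert_iff.mp hγ with rfl | hγ
        · exact satG_eq_nom.mpr ((𝔐.E_equiv c).refl _)
        · exact hΓ γ hγ)
  | @eq5 Γ Δ i j k c =>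
      intro 𝔐 hΓ
      have h1 : ValidSeq (insert (Node.eq (Path.nom j) c (Path.nom k))
          (insert (Node.eq (Path.nom i) c (Path.nom j))
            (insert (Node.eq (Path.nom i) c (Path.nom k)) Γ)), Δ) := hp _ (by simp)
      have hij := satG_eq_nom.mp (hΓ _ (Set.mem_insert _ _))
      have hik := satG_eq_nom.mp (hΓ _ (Set.mem_insert_of_mem _ (Set.mem_insert _ _)))
      exact h1 𝔐 (by
        intro γ hγ
        rcases Set.mem_insert_iff.mp hγ with rfl | hγ
        · exact satG_eq_nom.mpr ((𝔐.E_equiv c).trans ((𝔐.E_equiv c).symm hij) hik)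
        · exact hΓ γ hγ)
  | @neqL Γ Δ i j c =>
      intro 𝔐 hΓ
      have h1 : ValidSeq (Γ, insert (Node.eq (Path.nom i) c (Path.nom j)) Δ) :=
        hp _ (by simp)
      have hne := satG_neq_nom.mp (hΓ _ (Set.mem_insert _ _))
      obtain ⟨δ, hδ, hs⟩ := h1 𝔐 (fun γ hγ => hΓ γ (Set.mem_insert_of_mem _ hγ))
      rcases Set.mem_insert_iff.mp hδ with rfl | hδ
      · exact absurd (satG_eq_nom.mp hs) hne
      · exact ⟨δ, hδ, hs⟩
  | @neqR Γ Δ i j c =>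
      intro 𝔐 hΓ
      have h1 : ValidSeq (insert (Node.eq (Path.nom i) c (Path.nom j)) Γ, Δ) :=
        hp _ (by simp)
      by_cases he : 𝔐.E c (𝔐.g i) (𝔐.g j)
      · obtain ⟨δ, hδ, hs⟩ := h1 𝔐 (by
          intro γ hγ
          rcases Set.mem_insert_iff.mp hγ with rfl | hγ
          · exact satG_eq_nom.mpr he
          · exact hΓ γ hγ)
        exact ⟨δ, Set.mem_insert_of_mem _ hδ, hs⟩
      · exact ⟨_, Set.mem_insert _ _, satG_neq_nom.mpr he⟩
  | @cutRule Γ Δ Γ' Δ' φ ha hc =>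
      intro 𝔐 hΓ
      have h1 : ValidSeq (Γ, insert φ Δ) := hp _ (by simp)
      have h2 : ValidSeq (insert φ Γ', Δ') := hp _ (by simp)
      by_cases hφ : 𝔐.satG φ
      · obtain ⟨δ, hδ, hs⟩ := h2 𝔐 (by
          intro γ hγ
          rcases Set.mem_insert_iff.mp hγ with rfl | hγ
          · exact hφ
          · exact hΓ γ (Set.mem_union_right _ hγ))
        exact ⟨δ, Set.mem_union_right _ hδ, hs⟩
      · obtain ⟨δ, hδ, hs⟩ := h1 𝔐 (fun γ hγ => hΓ γ (Set.mem_union_left _ hγ))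
        rcases Set.mem_insert_iff.mp hδ with rfl | hδ
        · exact absurd hs hφ
        · exact ⟨δ, Set.mem_union_left _ hδ, hs⟩
  | @wl Γ Δ φ ha =>
      intro 𝔐 hΓ
      have h1 : ValidSeq (Γ, Δ) := hp _ (by simp)
      exact h1 𝔐 (fun γ hγ => hΓ γ (Set.mem_insert_of_mem _ hγ))
  | @wr Γ Δ φ ha =>
      intro 𝔐 hΓ
      have h1 : ValidSeq (Γ, Δ) := hp _ (by simp)
      obtain ⟨δ, hδ, hs⟩ := h1 𝔐 hΓ
      exact ⟨δ, Set.mem_insert_of_mem _ hδ, hs⟩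

end HXPathD
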